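/- Let X and Y be finite sets, μ a probability measure on X with μ(x) > 0 for all x, and R : X × Y → [0,∞) with Σ_y R(x,y) > 0 for every x and Σ_x R(x,y) > 0 for every y. Let φ, φ̃ : Y → ℝ with associated couplings π = π(φ) and π̃ = π(φ̃). Then the Bregman divergence of F(φ) = Σ_x μ(x) φ⁺(x) satisfies F(φ|φ̃) = H(π̃|π), where F(φ|φ̃) = F(φ) − F(φ̃) − ⟨∇F(φ̃), φ − φ̃⟩ and H(π̃|π) = Σ_{x,y} π̃(x,y) ln( π̃(x,y) / π(x,y) ) is the relative entropy of the couplings (with the convention 0 ln 0 = 0; note π(x,y) = 0 iff R(x,y) = 0 iff π̃(x,y) = 0). -/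

import Mathlib

open scoped BigOperators

/-- The `+`-transform: `φ⁺(x) = ln( Σ_y e^{φ(y)} R(x,y) / μ(x) )`. -/
noncomputable def plusT {X Y : Type*} [Fintype Y] (μ : X → ℝ) (R : X → Y → ℝ)
    (φ : Y → ℝ) (x : X) : ℝ :=
  Real.log ((∑ y, Real.exp (φ y) * R x y) / μ x)

/-- The coupling `π(φ)(x,y) = e^{φ(y) − φ⁺(x)} R(x,y)`. -/
noncomputable def coupling {X Y : Type*} [Fintype Y] (μ : X → ℝ) (R : X → Y → ℝ)
    (φ : Y → ℝ) (x : X) (y : Y) : ℝ :=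
  Real.exp (φ y - plusT μ R φ x) * R x y

/-- The functional `F(φ) = Σ_x μ(x) φ⁺(x)`. -/
noncomputable def Ffun {X Y : Type*} [Fintype X] [Fintype Y] (μ : X → ℝ)
    (R : X → Y → ℝ) (φ : Y → ℝ) : ℝ :=
  ∑ x, μ x * plusT μ R φ x

/-- the Bregman divergence
`F(φ|φ̃) = F(φ) − F(φ̃) − ⟨∇F(φ̃), φ − φ̃⟩` equals the relative entropy
`H(π̃|π) = Σ_{x,y} π̃(x,y) ln( π̃(x,y)/π(x,y) )` of the associated couplings
`π̃ = π(φ̃)` and `π = π(φ)`. -/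
theorem bregman_eq_relativeEntropy_couplings {X Y : Type*} [Fintype X] [Fintype Y]
    (μ : X → ℝ) (R : X → Y → ℝ)
    (hμpos : ∀ x, 0 < μ x) (hμ : ∑ x, μ x = 1)
    (hR : ∀ x y, 0 ≤ R x y)
    (hrow : ∀ x, 0 < ∑ y, R x y) (hcol : ∀ y, 0 < ∑ x, R x y)
    (φ φt : Y → ℝ) :
    Ffun μ R φ - Ffun μ R φt - fderiv ℝ (Ffun μ R) φt (φ - φt) =
      ∑ x, ∑ y, coupling μ R φt x y *
        Real.log (coupling μ R φt x y / coupling μ R φ x y) := by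
  classical
  -- positivity of the row sums
  have hSpos : ∀ (ψ : Y → ℝ) (x : X), 0 < ∑ y, Real.exp (ψ y) * R x y := by
    intro ψ x
    obtain ⟨y, hy⟩ : ∃ y, 0 < R x y := by
      by_contra h
      push_neg at h
      have h0 : ∑ y, R x y = 0 :=
        Finset.sum_eq_zero fun y _ => le_antisymm (h y) (hR x y)
      exact absurd (hrow x) (by simp [h0])
    exact Finset.sum_pos' (fun y _ => mul_nonneg (Real.exp_pos _).le (hR x y))
      ⟨y, Finset.mem_univ y, mul_pos (Real.exp_pos _) hy⟩
  have hexp : ∀ (ψ : Y → ℝ) (x : X),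
      Real.exp (plusT μ R ψ x) = (∑ y, Real.exp (ψ y) * R x y) / μ x := by
    intro ψ x
    rw [plusT, Real.exp_log (div_pos (hSpos ψ x) (hμpos x))]
  -- coupling rewritten
  have hcoup : ∀ (ψ : Y → ℝ) (x : X) (y : Y),
      coupling μ R ψ x y =
        (μ x / ∑ z, Real.exp (ψ z) * R x z) * (Real.exp (ψ y) * R x y) := by
    intro ψ x y
    rw [coupling, Real.exp_sub, hexp]
    field_simp
  -- sum of the coupling over y is μ x
  have hsum : ∀ (ψ : Y → ℝ) (x : X), ∑ y, coupling μ R ψ x y = μ x := by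
    intro ψ x
    simp only [hcoup]
    rw [← Finset.mul_sum, div_mul_cancel₀ _ (hSpos ψ x).ne']
  -- derivative of the inner sum
  have hL : ∀ x : X, HasFDerivAt (fun ψ : Y → ℝ => ∑ y, Real.exp (ψ y) * R x y)
      (∑ y, (Real.exp (φt y) * R x y) •
        (ContinuousLinearMap.proj y : (Y → ℝ) →L[ℝ] ℝ)) φt := by
    intro x
    apply HasFDerivAt.fun_sum
    intro y _
    have h1 : HasFDerivAt (fun ψ : Y → ℝ => ψ y)
        (ContinuousLinearMap.proj y : (Y → ℝ) →L[ℝ] ℝ) φt :=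
      hasFDerivAt_apply y φt
    have h2 := (Real.hasDerivAt_exp (φt y)).comp_hasFDerivAt φt h1
    have h3 := h2.mul_const (R x y)
    refine h3.congr_fderiv ?_
    rw [smul_smul, mul_comm]
  -- derivative of Ffun
  have hD : HasFDerivAt (Ffun μ R)
      (∑ x, (μ x / ∑ y, Real.exp (φt y) * R x y) •
        (∑ y, (Real.exp (φt y) * R x y) •
          (ContinuousLinearMap.proj y : (Y → ℝ) →L[ℝ] ℝ))) φt := by
    have heq : Ffun μ R = fun ψ =>
        ∑ x, μ x * (Real.log (∑ y, Real.exp (ψ y) * R x y) - Real.log (μ x)) := by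
      funext ψ
      refine Finset.sum_congr rfl fun x _ => ?_
      rw [plusT, Real.log_div (hSpos ψ x).ne' (hμpos x).ne']
    rw [heq]
    apply HasFDerivAt.fun_sum
    intro x _
    have h5 := (((Real.hasDerivAt_log (hSpos φt x).ne').comp_hasFDerivAt φt
      (hL x)).sub_const (Real.log (μ x))).const_mul (μ x)
    refine h5.congr_fderiv ?_
    rw [smul_smul, div_eq_mul_inv]
  rw [hD.fderiv]
  -- evaluate the derivative on φ - φt
  have happ : (∑ x, (μ x / ∑ y, Real.exp (φt y) * R x y) •
        (∑ y, (Real.exp (φt y) * R x y) •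
          (ContinuousLinearMap.proj y : (Y → ℝ) →L[ℝ] ℝ))) (φ - φt) =
      ∑ x, ∑ y, coupling μ R φt x y * (φ y - φt y) := by
    simp only [ContinuousLinearMap.coe_sum', Finset.sum_apply,
      ContinuousLinearMap.coe_smul', Pi.smul_apply, ContinuousLinearMap.proj_apply,
      Pi.sub_apply, smul_eq_mul, Finset.mul_sum]
    refine Finset.sum_congr rfl fun x _ => Finset.sum_congr rfl fun y _ => ?_
    rw [hcoup]
    ring
  rw [happ]
  -- rewrite the relative entropy term pointwise
  have hlog : ∀ x y, coupling μ R φt x y *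
      Real.log (coupling μ R φt x y / coupling μ R φ x y) =
      coupling μ R φt x y *
        ((plusT μ R φ x - plusT μ R φt x) - (φ y - φt y)) := by
    intro x y
    rcases eq_or_lt_of_le (hR x y) with h0 | hpos
    · simp [coupling, ← h0]
    · congr 1
      rw [coupling, coupling, mul_div_mul_right _ _ hpos.ne', ← Real.exp_sub,
        Real.log_exp]
      ring
  calc Ffun μ R φ - Ffun μ R φt - ∑ x, ∑ y, coupling μ R φt x y * (φ y - φt y)
      = ∑ x, (μ x * (plusT μ R φ x - plusT μ R φt x)
          - ∑ y, coupling μ R φt x y * (φ y - φt y)) := by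
        rw [Finset.sum_sub_distrib]
        simp [Ffun, Finset.sum_sub_distrib, mul_sub]
    _ = ∑ x, ∑ y, coupling μ R φt x y *
          ((plusT μ R φ x - plusT μ R φt x) - (φ y - φt y)) := by
        refine Finset.sum_congr rfl fun x _ => ?_
        have h := hsum φt x
        simp only [mul_sub, Finset.sum_sub_distrib, ← Finset.sum_mul, h]
    _ = ∑ x, ∑ y, coupling μ R φt x y *
          Real.log (coupling μ R φt x y / coupling μ R φ x y) := by
        refine Finset.sum_congr rfl fun x _ => Finset.sum_congr rfl fun y _ => ?_
        rw [hlog]
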